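/- Let X and Y be real symmetric n×n matrices with X positive definite, and let S be the 2n×2n block matrix S = ((X^{1/2}, 0),(X^{−1/2}Y, X^{−1/2})), where X^{1/2} is the positive square root of X. Then S is symplectic, and G := SᵀS equals the block matrix ((X + Y X⁻¹ Y, Y X⁻¹),(X⁻¹ Y, X⁻¹)); in particular G is symmetric, positive definite, and symplectic. -/

import Mathlib

open Matrix

noncomputable section

/-- The standard symplectic matrix `J = ((0, I), (-I, 0))`. -/
def stdJ (n : ℕ) : Matrix (Fin n ⊕ Fin n) (Fin n ⊕ Fin n) ℝ :=
  Matrix.fromBlocks 0 1 (-1) 0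

/-- The square root of a positive semidefinite matrix, with the definition it had in
Mathlib (December 2024), where it was `Matrix.PosSemidef.sqrt`. -/
def Matrix.PosSemidef.sqrt {n : Type*} [Fintype n] [DecidableEq n] {A : Matrix n n ℝ}
    (hA : A.PosSemidef) : Matrix n n ℝ :=
  (hA.1.eigenvectorUnitary : Matrix n n ℝ) * diagonal ((↑) ∘ (√·) ∘ hA.1.eigenvalues) *
    (star hA.1.eigenvectorUnitary : Matrix n n ℝ)

/-- A real `2n × 2n` matrix is symplectic if `Sᵀ J S = J`. -/
def IsSymplectic {n : ℕ} (S : Matrix (Fin n ⊕ Fin n) (Fin n ⊕ Fin n) ℝ) : Prop :=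
  Sᵀ * stdJ n * S = stdJ n

theorem PosSemidef_sqrt_mul_self_aux {n : Type*} [Fintype n] [DecidableEq n] {A : Matrix n n ℝ}
    (hA : A.PosSemidef) : hA.sqrt * hA.sqrt = A := by
  have hU : (star hA.1.eigenvectorUnitary : Matrix n n ℝ) * (hA.1.eigenvectorUnitary : Matrix n n ℝ) = 1 :=
    Unitary.coe_star_mul_self _
  have hD : diagonal ((↑) ∘ (√·) ∘ hA.1.eigenvalues) * diagonal ((↑) ∘ (√·) ∘ hA.1.eigenvalues)
      = diagonal (RCLike.ofReal ∘ hA.1.eigenvalues : n → ℝ) := by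
    rw [diagonal_mul_diagonal]
    congr 1
    funext i
    simp [Real.mul_self_sqrt (hA.eigenvalues_nonneg i)]
  unfold Matrix.PosSemidef.sqrt
  conv_rhs => rw [hA.1.spectral_theorem, Unitary.conjStarAlgAut_apply, ← hD]
  simp only [Matrix.mul_assoc]
  rw [← Matrix.mul_assoc (star _ : Matrix n n ℝ) (_ : Matrix n n ℝ), hU, Matrix.one_mul]

theorem PosSemidef_sqrt_transpose_aux {n : Type*} [Fintype n] [DecidableEq n] {A : Matrix n n ℝ}
    (hA : A.PosSemidef) : (hA.sqrt)ᵀ = hA.sqrt := by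
  unfold Matrix.PosSemidef.sqrt
  simp [Matrix.transpose_mul, Matrix.mul_assoc, Matrix.star_eq_conjTranspose,
    Matrix.conjTranspose_eq_transpose_of_trivial]

/-- For `X, Y` symmetric with `X` positive definite, the block matrix
`S = ((X^{1/2}, 0), (X^{-1/2}Y, X^{-1/2}))` is symplectic and
`G = SᵀS = ((X + Y X⁻¹ Y, Y X⁻¹), (X⁻¹ Y, X⁻¹))` is symmetric, positive definite
and symplectic. -/
theorem symplectic_block_sqrt {n : ℕ} (hn : 1 ≤ n)
    (X Y : Matrix (Fin n) (Fin n) ℝ) (hXsymm : X.IsSymm) (hYsymm : Y.IsSymm)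
    (hX : X.PosDef)
    (S : Matrix (Fin n ⊕ Fin n) (Fin n ⊕ Fin n) ℝ)
    (hS : S = Matrix.fromBlocks hX.posSemidef.sqrt 0
      (hX.posSemidef.sqrt⁻¹ * Y) hX.posSemidef.sqrt⁻¹) :
    IsSymplectic S ∧
    Sᵀ * S = Matrix.fromBlocks (X + Y * X⁻¹ * Y) (Y * X⁻¹) (X⁻¹ * Y) X⁻¹ ∧
    (Sᵀ * S).IsSymm ∧ (Sᵀ * S).PosDef ∧ IsSymplectic (Sᵀ * S) := by
  set R := hX.posSemidef.sqrt with hRdef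
  have hRR : R * R = X := PosSemidef_sqrt_mul_self_aux hX.posSemidef
  have hRsymm : Rᵀ = R := by
    exact PosSemidef_sqrt_transpose_aux hX.posSemidef
  have hdetX : X.det ≠ 0 := hX.det_pos.ne'
  have hdetR : R.det ≠ 0 := by
    intro h
    apply hdetX
    rw [← hRR, Matrix.det_mul, h, mul_zero]
  have hRunit : IsUnit R.det := isUnit_iff_ne_zero.mpr hdetR
  have hRl : R⁻¹ * R = 1 := Matrix.nonsing_inv_mul R hRunit
  have hRr : R * R⁻¹ = 1 := Matrix.mul_nonsing_inv R hRunit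
  have hRl' : ∀ B : Matrix (Fin n) (Fin n) ℝ, R⁻¹ * (R * B) = B := fun B => by
    rw [← Matrix.mul_assoc, hRl, Matrix.one_mul]
  have hRr' : ∀ B : Matrix (Fin n) (Fin n) ℝ, R * (R⁻¹ * B) = B := fun B => by
    rw [← Matrix.mul_assoc, hRr, Matrix.one_mul]
  have hRinvT : (R⁻¹)ᵀ = R⁻¹ := by
    rw [Matrix.transpose_nonsing_inv R, hRsymm]
  have hXinv : X⁻¹ = R⁻¹ * R⁻¹ := by
    rw [← hRR, Matrix.mul_inv_rev]
  have hST : Sᵀ = Matrix.fromBlocks R (Y * R⁻¹) 0 R⁻¹ := by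
    rw [hS, Matrix.fromBlocks_transpose, hRsymm, hRinvT, Matrix.transpose_mul, hRinvT,
      hYsymm.eq, Matrix.transpose_zero]
  have hSymp : IsSymplectic S := by
    unfold IsSymplectic stdJ
    rw [hST, hS, Matrix.fromBlocks_multiply, Matrix.fromBlocks_multiply,
      Matrix.fromBlocks_inj]
    refine ⟨?_, ?_, ?_, ?_⟩ <;>
      simp [Matrix.mul_assoc, hRl, hRr, hRl', hRr']
  have hG : Sᵀ * S = Matrix.fromBlocks (X + Y * X⁻¹ * Y) (Y * X⁻¹) (X⁻¹ * Y) X⁻¹ := by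
    rw [hST, hS, Matrix.fromBlocks_multiply, Matrix.fromBlocks_inj]
    refine ⟨?_, ?_, ?_, ?_⟩ <;>
      simp [hRR, hXinv, Matrix.mul_assoc]
  have hGsymm : (Sᵀ * S).IsSymm := by
    simp [Matrix.IsSymm, Matrix.transpose_mul]
  -- invertibility of S
  have hdetS : IsUnit S.det := by
    rw [hS, Matrix.det_fromBlocks_zero₁₂, Matrix.det_nonsing_inv]
    exact isUnit_iff_ne_zero.mpr (mul_ne_zero hdetR (by simp [Ring.inverse_eq_inv', hdetR]))
  have hSinj : Function.Injective (S.mulVec) := Matrix.mulVec_injective_iff_isUnit.mpr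
    ((Matrix.isUnit_iff_isUnit_det S).mpr hdetS)
  have hGposdef : (Sᵀ * S).PosDef := by
    refine Matrix.PosDef.of_dotProduct_mulVec_pos ?_ (fun x hx => ?_)
    · rw [Matrix.IsHermitian, Matrix.conjTranspose_eq_transpose_of_trivial, hGsymm.eq]
    · have hv : S *ᵥ x ≠ 0 := by
        intro h
        apply hx
        apply hSinj
        simpa using h
      rw [star_trivial, ← Matrix.mulVec_mulVec, Matrix.dotProduct_mulVec,
        Matrix.vecMul_transpose]
      have := Matrix.dotProduct_self_star_pos_iff (v := S *ᵥ x) |>.mpr hv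
      simpa using this
  -- G is symplectic
  have hJJ : stdJ n * stdJ n = -1 := by
    unfold stdJ
    rw [Matrix.fromBlocks_multiply]
    simp [← Matrix.fromBlocks_one, Matrix.fromBlocks_neg]
  have hSJS : S * stdJ n * Sᵀ = stdJ n := by
    have h1 : (-(stdJ n) * Sᵀ * stdJ n) * S = 1 := by
      have : -(stdJ n) * Sᵀ * stdJ n * S = -(stdJ n) * (Sᵀ * stdJ n * S) := by
        rw [Matrix.mul_assoc, Matrix.mul_assoc, Matrix.mul_assoc]
      rw [this, hSymp, Matrix.neg_mul, hJJ, neg_neg]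
    have h2 : S * (-(stdJ n) * Sᵀ * stdJ n) = 1 := mul_eq_one_comm.mpr h1
    have key : S * stdJ n * Sᵀ = S * (-(stdJ n) * Sᵀ * stdJ n) * stdJ n := by
      have e : S * (-(stdJ n) * Sᵀ * stdJ n) * stdJ n
          = S * stdJ n * Sᵀ * -(stdJ n * stdJ n) := by noncomm_ring
      rw [e, hJJ]
      simp
    rw [key, h2, Matrix.one_mul]
  have hGsymp : IsSymplectic (Sᵀ * S) := by
    unfold IsSymplectic
    rw [Matrix.transpose_mul, Matrix.transpose_transpose]
    calc Sᵀ * Sᵀᵀ * stdJ n * (Sᵀ * S) = Sᵀ * (S * stdJ n * Sᵀ) * S := by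
          rw [Matrix.transpose_transpose]
          noncomm_ring
      _ = stdJ n := by rw [hSJS, hSymp]
  exact ⟨hSymp, hG, hGsymm, hGposdef, hGsymp⟩
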